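/- Let F̃ ∈ ℝ^{n×n}, G̃ ∈ ℝ^{n×p}, let P ∈ ℝ^{n×n} be symmetric, and let H ∈ ℝ^{p×n}. Suppose the 2n×2n block matrix [[P, (F̃P + G̃H)^T], [F̃P + G̃H, P]] is positive definite. Then P is positive definite (hence invertible), and setting J = H P^{−1} and Ã = F̃ + G̃ J, the matrix Ã^T P^{−1} Ã − P^{−1} is negative definite. -/

import Mathlib

open Matrix

/-- Symmetric positive definiteness of a real matrix. -/
def PosDefM {ι : Type*} [Fintype ι] (P : Matrix ι ι ℝ) : Prop :=
  Pᵀ = P ∧ ∀ v : ι → ℝ, v ≠ 0 → 0 < v ⬝ᵥ (P *ᵥ v)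

/-- Negative definiteness of a real matrix. -/
def NegDefM {ι : Type*} [Fintype ι] (Q : Matrix ι ι ℝ) : Prop :=
  ∀ v : ι → ℝ, v ≠ 0 → v ⬝ᵥ (Q *ᵥ v) < 0

private lemma dp_aux {ι : Type*} [Fintype ι] (M N : Matrix ι ι ℝ) (w : ι → ℝ) :
    (N *ᵥ w) ⬝ᵥ (M *ᵥ w) = w ⬝ᵥ ((Nᵀ * M) *ᵥ w) := by
  rw [Matrix.dotProduct_mulVec, Matrix.dotProduct_mulVec, ← Matrix.vecMul_vecMul,
    Matrix.vecMul_transpose]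

private lemma dp_aux2 {ι : Type*} [Fintype ι] (M N : Matrix ι ι ℝ) (w : ι → ℝ) :
    w ⬝ᵥ ((Nᵀ * M * N) *ᵥ w) = (N *ᵥ w) ⬝ᵥ (M *ᵥ (N *ᵥ w)) := by
  rw [Matrix.mulVec_mulVec, dp_aux, Matrix.mul_assoc]

/-- **LMI-based design (Proposition 11 of the paper).** If the block LMI
`[[P, (F̃P + G̃H)ᵀ], [F̃P + G̃H, P]] ≻ 0` holds for a symmetric `P`, then `P ≻ 0`
and, setting `J = H P⁻¹` and `Ã = F̃ + G̃ J`, one has `Ãᵀ P⁻¹ Ã - P⁻¹ ≺ 0`. -/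
theorem lmi_design_state_feedback
    (n p : ℕ)
    (F : Matrix (Fin n) (Fin n) ℝ) (G : Matrix (Fin n) (Fin p) ℝ)
    (P : Matrix (Fin n) (Fin n) ℝ) (hPsym : Pᵀ = P)
    (H : Matrix (Fin p) (Fin n) ℝ)
    (hLMI : PosDefM (Matrix.fromBlocks P (F * P + G * H)ᵀ (F * P + G * H) P)) :
    PosDefM P ∧
      NegDefM ((F + G * (H * P⁻¹))ᵀ * P⁻¹ * (F + G * (H * P⁻¹)) - P⁻¹) := by
  obtain ⟨-, hblk⟩ := hLMI
  set B : Matrix (Fin n) (Fin n) ℝ := F * P + G * H with hB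
  -- P is positive definite
  have hP : PosDefM P := by
    refine ⟨hPsym, fun v hv => ?_⟩
    have h := hblk (Sum.elim v 0) (by
      intro h; apply hv; funext i; exact congrFun h (Sum.inl i))
    simpa [fromBlocks_mulVec, sumElim_dotProduct_sumElim] using h
  refine ⟨hP, ?_⟩
  have hPD : P.PosDef := by
    refine Matrix.posDef_iff_dotProduct_mulVec.mpr ⟨by simpa [Matrix.IsHermitian] using hPsym, fun v hv => ?_⟩
    simpa using hP.2 v hv
  have hdet : IsUnit P.det := isUnit_iff_ne_zero.mpr (ne_of_gt hPD.det_pos)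
  have hPPinv : P * P⁻¹ = 1 := Matrix.mul_nonsing_inv P hdet
  have hPinvSym : P⁻¹ᵀ = P⁻¹ := by rw [Matrix.transpose_nonsing_inv, hPsym]
  -- Schur complement is positive definite
  have hS : ∀ w : Fin n → ℝ, w ≠ 0 → 0 < w ⬝ᵥ ((P - Bᵀ * P⁻¹ * B) *ᵥ w) := by
    intro w hw
    have h := hblk (Sum.elim w (-(P⁻¹ *ᵥ (B *ᵥ w)))) (by
      intro h; apply hw; funext i; exact congrFun h (Sum.inl i))
    rw [fromBlocks_mulVec, sumElim_dotProduct_sumElim] at h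
    simp only [Sum.elim_comp_inl, Sum.elim_comp_inr] at h
    have key : w ⬝ᵥ (P *ᵥ w + Bᵀ *ᵥ -(P⁻¹ *ᵥ (B *ᵥ w))) +
        (-(P⁻¹ *ᵥ (B *ᵥ w))) ⬝ᵥ (B *ᵥ w + P *ᵥ -(P⁻¹ *ᵥ (B *ᵥ w)))
        = w ⬝ᵥ ((P - Bᵀ * P⁻¹ * B) *ᵥ w) := by
      have hPy : P *ᵥ (P⁻¹ *ᵥ (B *ᵥ w)) = B *ᵥ w := by
        rw [Matrix.mulVec_mulVec, hPPinv, Matrix.one_mulVec]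
      have hsymdp : (P⁻¹ *ᵥ (B *ᵥ w)) ⬝ᵥ (B *ᵥ w)
          = w ⬝ᵥ ((Bᵀ * P⁻¹ * B) *ᵥ w) := by
        rw [dp_aux2 P⁻¹ B w, dotProduct_comm]
      have hq : w ⬝ᵥ (Bᵀ *ᵥ (P⁻¹ *ᵥ (B *ᵥ w))) = w ⬝ᵥ ((Bᵀ * P⁻¹ * B) *ᵥ w) := by
        simp only [Matrix.mulVec_mulVec, Matrix.mul_assoc]
      simp only [Matrix.mulVec_neg, dotProduct_add, dotProduct_neg, neg_dotProduct,
        Matrix.sub_mulVec, dotProduct_sub, hPy, neg_neg]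
      rw [hsymdp, hq]
      ring
    rw [key] at h
    exact h
  have hA : F + G * (H * P⁻¹) = B * P⁻¹ := by
    rw [hB, Matrix.add_mul, Matrix.mul_assoc F, hPPinv, Matrix.mul_one, Matrix.mul_assoc]
  intro v hv
  set w : Fin n → ℝ := P⁻¹ *ᵥ v with hwdef
  have hPw : P *ᵥ w = v := by rw [hwdef, Matrix.mulVec_mulVec, hPPinv, Matrix.one_mulVec]
  have hw : w ≠ 0 := by
    intro h
    apply hv
    rw [h, Matrix.mulVec_zero] at hPw
    exact hPw.symm
  have h := hS w hw
  have key : v ⬝ᵥ (((F + G * (H * P⁻¹))ᵀ * P⁻¹ * (F + G * (H * P⁻¹)) - P⁻¹) *ᵥ v)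
      = -(w ⬝ᵥ ((P - Bᵀ * P⁻¹ * B) *ᵥ w)) := by
    rw [hA]
    have e1 : v ⬝ᵥ (((B * P⁻¹)ᵀ * P⁻¹ * (B * P⁻¹)) *ᵥ v) = w ⬝ᵥ ((Bᵀ * P⁻¹ * B) *ᵥ w) := by
      have hBv : (B * P⁻¹) *ᵥ v = B *ᵥ w := by rw [hwdef, Matrix.mulVec_mulVec]
      rw [dp_aux2 P⁻¹ (B * P⁻¹) v, dp_aux2 P⁻¹ B w, hBv]
    have e2 : v ⬝ᵥ (P⁻¹ *ᵥ v) = w ⬝ᵥ (P *ᵥ w) := by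
      rw [hPw, dotProduct_comm, ← hwdef]
    simp only [Matrix.sub_mulVec, dotProduct_sub, e1, e2]
    ring
  rw [key]
  linarith
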